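/- Define d₀(n) = (−(d₁(n) + 36·√(d₂(n))))^{1/3} (real cube root). Then: (i) d₀ is strictly decreasing on [15, ∞), i.e. for all real 15 ≤ m < n one has d₀(n) < d₀(m); and (ii) for every real n ≥ 15 one has 128 < d₀(n) < 187. -/

import Mathlib

open MeasureTheory Filter

noncomputable section

def dd1 (n : ℝ) : ℝ :=
  -108*n^6 + 1296*n^5 - 3024*n^4 - 10368*n^3 + 103104*n^2 + 20736*n - 94976

def dd2 (n : ℝ) : ℝ :=
  9*n^12 - 216*n^11 + 1800*n^10 - 4320*n^9 - 30864*n^8 + 251136*n^7 - 690432*n^6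
    - 1936384*n^5 + 6915840*n^4 + 4818944*n^3 - 16644096*n^2 - 3039232*n + 6131712

/-- `d₀(n)`, the real cube root of `-(d₁(n) + 36√(d₂(n)))`. -/
def dd0 (n : ℝ) : ℝ := (-(dd1 n + 36 * Real.sqrt (dd2 n))) ^ ((1 : ℝ)/3)

def dfn (n : ℝ) : ℝ :=
  (1/6) * Real.sqrt (9*n^2 + 96 - (1536 + 1152*n^2) / dd0 n - (3/2) * dd0 n)

/-- The Joseph–Lundgren exponent `p_c(n)` (for `n ≥ 15`; `p_c(n) = +∞` for `n ≤ 14`,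
which is encoded by imposing the bound `p < pc n` only when `15 ≤ n`). -/
def pc (n : ℝ) : ℝ := (n + 4 - 2 * dfn n) / (n - 8 - 2 * dfn n)


def qq1 (n : ℝ) : ℝ := 20736 + 206208*n + (-31104)*n^2 + (-12096)*n^3 + 6480*n^4 + (-648)*n^5
def qq2 (n : ℝ) : ℝ := (-3039232) + (-33288192)*n + 14456832*n^2 + 27663360*n^3 + (-9681920)*n^4 + (-4142592)*n^5 + 1757952*n^6 + (-246912)*n^7 + (-38880)*n^8 + 18000*n^9 + (-2376)*n^10 + 108*n^11

private lemma l_dd2_pos {n : ℝ} (hn : 15 ≤ n) : 0 < dd2 n := by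
  have ht : (0:ℝ) ≤ n - 15 := by linarith
  have e : dd2 n = 126100750123257 + 130684714202588*(n-15) + 60426347513634*(n-15)^2 + 16630573432844*(n-15)^3 + 3048957353415*(n-15)^4 + 393377921336*(n-15)^5 + 36687653148*(n-15)^6 + 2494830456*(n-15)^7 + 122860311*(n-15)^8 + 4275180*(n-15)^9 + 99810*(n-15)^10 + 1404*(n-15)^11 + 9*(n-15)^12 := by
    unfold dd2; ring
  linarith [e, ht, pow_nonneg ht 2, pow_nonneg ht 3, pow_nonneg ht 4, pow_nonneg ht 5, pow_nonneg ht 6, pow_nonneg ht 7, pow_nonneg ht 8, pow_nonneg ht 9, pow_nonneg ht 10, pow_nonneg ht 11, pow_nonneg ht 12]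

private lemma l_p1_neg {n : ℝ} (hn : 15 ≤ n) : 0 < -(qq1 n) := by
  have ht : (0:ℝ) ≤ n - 15 := by linarith
  have e : -(qq1 n) = 208733544 + 85436712*(n-15) + 13697424*(n-15)^2 + 1081296*(n-15)^3 + 42120*(n-15)^4 + 648*(n-15)^5 := by
    unfold qq1; ring
  linarith [e, ht, pow_nonneg ht 2, pow_nonneg ht 3, pow_nonneg ht 4, pow_nonneg ht 5]

private lemma l_p2_pos {n : ℝ} (hn : 15 ≤ n) : 0 < qq2 n := by
  have ht : (0:ℝ) ≤ n - 15 := by linarith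
  have e : qq2 n = 130684714202588 + 120852695027268*(n-15) + 49891720298532*(n-15)^2 + 12195829413660*(n-15)^3 + 1966889606680*(n-15)^4 + 220125918888*(n-15)^5 + 17463813192*(n-15)^6 + 982882488*(n-15)^7 + 38476620*(n-15)^8 + 998100*(n-15)^9 + 15444*(n-15)^10 + 108*(n-15)^11 := by
    unfold qq2; ring
  linarith [e, ht, pow_nonneg ht 2, pow_nonneg ht 3, pow_nonneg ht 4, pow_nonneg ht 5, pow_nonneg ht 6, pow_nonneg ht 7, pow_nonneg ht 8, pow_nonneg ht 9, pow_nonneg ht 10, pow_nonneg ht 11]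

private lemma l_key {n : ℝ} (hn : 15 ≤ n) : 0 < 324 * (qq2 n)^2 - (qq1 n)^2 * dd2 n := by
  have ht : (0:ℝ) ≤ n - 15 := by linarith
  have e : 324 * (qq2 n)^2 - (qq1 n)^2 * dd2 n = 39261333373287648943883157504 + 42722551428120826755491561472*(n-15) + 21729154580532492482956492800*(n-15)^2 + 6845914647974729995102715904*(n-15)^3 + 1493068633590153729105985536*(n-15)^4 + 238639241134107343372419072*(n-15)^5 + 28863452374212000526368768*(n-15)^6 + 2689151000783178115842048*(n-15)^7 + 194526584700284191113216*(n-15)^8 + 10922900892474302005248*(n-15)^9 + 472113567267670720512*(n-15)^10 + 15422674023342931968*(n-15)^11 + 368540468662763520*(n-15)^12 + 6080756044529664*(n-15)^13 + 61935710109696*(n-15)^14 + 293534171136*(n-15)^15 := by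
    unfold qq1 qq2 dd2; ring
  linarith [e, ht, pow_nonneg ht 2, pow_nonneg ht 3, pow_nonneg ht 4, pow_nonneg ht 5, pow_nonneg ht 6, pow_nonneg ht 7, pow_nonneg ht 8, pow_nonneg ht 9, pow_nonneg ht 10, pow_nonneg ht 11, pow_nonneg ht 12, pow_nonneg ht 13, pow_nonneg ht 14, pow_nonneg ht 15]

private lemma l_upper_poly {n : ℝ} (hn : 15 ≤ n) : 0 < 1296 * dd2 n - (dd1 n + 6539203)^2 := by
  have ht : (0:ℝ) ≤ n - 15 := by linarith
  have e : 1296 * dd2 n - (dd1 n + 6539203)^2 = 76551595157183 + 641456234949744*(n-15) + 212254112608632*(n-15)^2 + 29028298222368*(n-15)^3 + 2004771276216*(n-15)^4 + 69403857264*(n-15)^5 + 959483016*(n-15)^6 := by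
    unfold dd1 dd2; ring
  linarith [e, ht, pow_nonneg ht 2, pow_nonneg ht 3, pow_nonneg ht 4, pow_nonneg ht 5, pow_nonneg ht 6]

private lemma l_lower_poly {n : ℝ} (hn : 15 ≤ n) : 0 < (dd1 n + 2097152)^2 - 1296 * dd2 n := by
  have ht : (0:ℝ) ≤ n - 15 := by linarith
  have e : (dd1 n + 2097152)^2 - 1296 * dd2 n = 3533830707216384 + 1212953860767744*(n-15) + 167260119367680*(n-15)^2 + 11534805762048*(n-15)^3 + 396814712832*(n-15)^4 + 5435817984*(n-15)^5 := by
    unfold dd1 dd2; ring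
  linarith [e, ht, pow_nonneg ht 2, pow_nonneg ht 3, pow_nonneg ht 4, pow_nonneg ht 5]

private lemma l_d1_big {n : ℝ} (hn : 15 ≤ n) : 0 < -(dd1 n) - 6539203 := by
  have ht : (0:ℝ) ≤ n - 15 := by linarith
  have e : -(dd1 n) - 6539203 = 404165833 + 208733544*(n-15) + 42718356*(n-15)^2 + 4565808*(n-15)^3 + 270324*(n-15)^4 + 8424*(n-15)^5 + 108*(n-15)^6 := by
    unfold dd1; ring
  linarith [e, ht, pow_nonneg ht 2, pow_nonneg ht 3, pow_nonneg ht 4, pow_nonneg ht 5, pow_nonneg ht 6]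


private def gg (n : ℝ) : ℝ := -(dd1 n + 36 * Real.sqrt (dd2 n))

private lemma gg_bounds {n : ℝ} (hn : 15 ≤ n) : 2097152 < gg n ∧ gg n < 6539203 := by
  have hd2 := l_dd2_pos hn
  set s := Real.sqrt (dd2 n) with hsdef
  have hs0 : 0 ≤ s := Real.sqrt_nonneg _
  have hs2 : s ^ 2 = dd2 n := Real.sq_sqrt hd2.le
  have hbig := l_d1_big hn
  have hgg : gg n = -(dd1 n) - 36 * s := by unfold gg; ring
  constructor
  · have hB : 0 < -(dd1 n) - 2097152 := by linarith
    have hsq : (36 * s) ^ 2 < (-(dd1 n) - 2097152) ^ 2 := by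
      have h8 := l_lower_poly hn
      have e1 : (36 * s) ^ 2 = 1296 * dd2 n := by rw [mul_pow, hs2]; ring
      have e2 : (-(dd1 n) - 2097152) ^ 2 = (dd1 n + 2097152) ^ 2 := by ring
      rw [e1, e2]; linarith
    have := lt_of_pow_lt_pow_left₀ 2 hB.le hsq
    linarith [hgg, this]
  · have hsq : (-(dd1 n) - 6539203) ^ 2 < (36 * s) ^ 2 := by
      have h6 := l_upper_poly hn
      have e1 : (36 * s) ^ 2 = 1296 * dd2 n := by rw [mul_pow, hs2]; ring
      have e2 : (-(dd1 n) - 6539203) ^ 2 = (dd1 n + 6539203) ^ 2 := by ring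
      rw [e1, e2]; linarith
    have := lt_of_pow_lt_pow_left₀ 2 (by positivity : (0:ℝ) ≤ 36 * s) hsq
    linarith [hgg, this]

private lemma hasDerivAt_dd1 (x : ℝ) : HasDerivAt dd1 (qq1 x) x := by
  have h := hasDerivAt_id x
  have H := (((((((h.pow 6).const_mul (-108:ℝ)).add ((h.pow 5).const_mul (1296:ℝ))).add
    ((h.pow 4).const_mul (-3024:ℝ))).add ((h.pow 3).const_mul (-10368:ℝ))).add
    ((h.pow 2).const_mul (103104:ℝ))).add (h.const_mul (20736:ℝ))).add_const (-94976:ℝ)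
  have Hd := H.congr_of_eventuallyEq (Filter.Eventually.of_forall (fun y => by simp only [id_eq, Pi.add_apply, Pi.pow_apply]; unfold dd1; ring) :
    dd1 =ᶠ[nhds x] _)
  refine Hd.congr_deriv ?_
  simp only [id_eq]; unfold qq1; push_cast; ring

private lemma hasDerivAt_dd2 (x : ℝ) : HasDerivAt dd2 (qq2 x) x := by
  have h := hasDerivAt_id x
  have H := (((((((((((((h.pow 12).const_mul (9:ℝ)).add ((h.pow 11).const_mul (-216:ℝ))).add
    ((h.pow 10).const_mul (1800:ℝ))).add ((h.pow 9).const_mul (-4320:ℝ))).add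
    ((h.pow 8).const_mul (-30864:ℝ))).add ((h.pow 7).const_mul (251136:ℝ))).add
    ((h.pow 6).const_mul (-690432:ℝ))).add ((h.pow 5).const_mul (-1936384:ℝ))).add
    ((h.pow 4).const_mul (6915840:ℝ))).add ((h.pow 3).const_mul (4818944:ℝ))).add
    ((h.pow 2).const_mul (-16644096:ℝ))).add (h.const_mul (-3039232:ℝ))).add_const (6131712:ℝ)
  have Hd := H.congr_of_eventuallyEq (Filter.Eventually.of_forall (fun y => by simp only [id_eq, Pi.add_apply, Pi.pow_apply]; unfold dd2; ring) :
    dd2 =ᶠ[nhds x] _)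
  refine Hd.congr_deriv ?_
  simp only [id_eq]; unfold qq2; push_cast; ring

private lemma gg_strictAnti : StrictAntiOn gg (Set.Ici (15:ℝ)) := by
  have c1 : Continuous dd1 := by unfold dd1; fun_prop
  have c2 : Continuous dd2 := by unfold dd2; fun_prop
  have cg : Continuous gg := ((c1.add (continuous_const.mul (Real.continuous_sqrt.comp c2))).neg)
  apply strictAntiOn_of_deriv_neg (convex_Ici 15) cg.continuousOn
  intro x hx
  rw [interior_Ici] at hx
  have hx15 : (15:ℝ) ≤ x := le_of_lt hx
  have hd2 := l_dd2_pos hx15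
  have hspos : 0 < Real.sqrt (dd2 x) := Real.sqrt_pos.mpr hd2
  have hs2 : Real.sqrt (dd2 x) ^ 2 = dd2 x := Real.sq_sqrt hd2.le
  have hsd : HasDerivAt (fun y => Real.sqrt (dd2 y)) (qq2 x / (2 * Real.sqrt (dd2 x))) x :=
    (hasDerivAt_dd2 x).sqrt (ne_of_gt hd2)
  have hg : HasDerivAt gg (-(qq1 x + 36 * (qq2 x / (2 * Real.sqrt (dd2 x))))) x :=
    ((hasDerivAt_dd1 x).add (hsd.const_mul (36:ℝ))).neg
  rw [hg.deriv]
  set s := Real.sqrt (dd2 x) with hsdef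
  have hp1 := l_p1_neg hx15
  have hp2 := l_p2_pos hx15
  have hkey := l_key hx15
  have hsq : ((-(qq1 x)) * s) ^ 2 < (18 * qq2 x) ^ 2 := by
    have e1 : ((-(qq1 x)) * s) ^ 2 = (qq1 x) ^ 2 * dd2 x := by rw [mul_pow, hs2]; ring
    have e2 : (18 * qq2 x) ^ 2 = 324 * (qq2 x) ^ 2 := by ring
    rw [e1, e2]; linarith
  have hlt : (-(qq1 x)) * s < 18 * qq2 x :=
    lt_of_pow_lt_pow_left₀ 2 (by positivity) hsq
  have hrw : qq1 x + 36 * (qq2 x / (2 * s)) = (qq1 x * s + 18 * qq2 x) / s := by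
    field_simp; ring
  rw [neg_lt_zero, hrw]
  apply div_pos _ hspos
  nlinarith [hlt]

private lemma rpow_cube (a : ℝ) (ha : 0 ≤ a) : (a ^ (3:ℕ)) ^ ((1:ℝ)/3) = a := by
  rw [← Real.rpow_natCast a 3, ← Real.rpow_mul ha]
  norm_num

/-- **Lemma 8.1(2).** The function `d₀` is strictly decreasing on `[15, ∞)`, and
`128 < d₀(n) < 187` for all real `n ≥ 15`. -/
theorem dd0_strictAnti_and_bounds :
    (∀ m n : ℝ, 15 ≤ m → m < n → dd0 n < dd0 m) ∧
    (∀ n : ℝ, 15 ≤ n → 128 < dd0 n ∧ dd0 n < 187) := by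
  have hdd0 : ∀ n : ℝ, dd0 n = gg n ^ ((1:ℝ)/3) := fun n => rfl
  constructor
  · intro m n hm hmn
    have hn : (15:ℝ) ≤ n := le_of_lt (lt_of_le_of_lt hm hmn)
    have hlt : gg n < gg m := gg_strictAnti hm hn hmn
    have hpos : 0 ≤ gg n := le_of_lt (lt_trans (by norm_num) (gg_bounds hn).1)
    rw [hdd0 m, hdd0 n]
    exact Real.rpow_lt_rpow hpos hlt (by norm_num)
  · intro n hn
    obtain ⟨hlo, hhi⟩ := gg_bounds hn
    rw [hdd0 n]
    constructor
    · have h := Real.rpow_lt_rpow (by norm_num : (0:ℝ) ≤ 2097152) hlo (by norm_num : (0:ℝ) < 1/3)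
      have e : ((2097152:ℝ)) ^ ((1:ℝ)/3) = 128 := by
        rw [show (2097152:ℝ) = 128 ^ (3:ℕ) by norm_num]
        exact rpow_cube 128 (by norm_num)
      linarith [h, e]
    · have h := Real.rpow_lt_rpow (by positivity) hhi (by norm_num : (0:ℝ) < 1/3)
      have e : ((6539203:ℝ)) ^ ((1:ℝ)/3) = 187 := by
        rw [show (6539203:ℝ) = 187 ^ (3:ℕ) by norm_num]
        exact rpow_cube 187 (by norm_num)
      linarith [h, e]
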